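/- Let G be a group and let L be a subgroup generated by a finite set {y_1, ..., y_k} of elements, each of which has exactly k conjugates in G. Then the center Z(L) has index at most k^k in L. -/

import Mathlib

/-- If `L` is generated by elements `y 1, ..., y k`, each of which has exactly `k`
conjugates in `G` (i.e. its centralizer has index `k`), then the center of `L`
has index at most `k ^ k` in `L`. -/
theorem stmt0 {G : Type*} [Group G] (k : ℕ) (hk : 0 < k) (y : Fin k → G)
    (hconj : ∀ i, (Subgroup.centralizer {y i}).index = k)
    (L : Subgroup G) (hL : L = Subgroup.closure (Set.range y)) :
    (Subgroup.center ↥L).index ≤ k ^ k := by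
  have hmem : ∀ i, y i ∈ L := by
    intro i
    rw [hL]
    exact Subgroup.subset_closure ⟨i, rfl⟩
  have hcenter : Subgroup.center ↥L
      = (⨅ i, Subgroup.centralizer {y i}).subgroupOf L := by
    ext z
    simp only [Subgroup.mem_center_iff, Subgroup.mem_subgroupOf, Subgroup.mem_iInf,
      Subgroup.mem_centralizer_singleton_iff]
    constructor
    · intro h i
      exact (congrArg Subtype.val (h ⟨y i, hmem i⟩)).symm
    · intro h g
      have hg : (g : G) ∈ Subgroup.centralizer {(z : G)} := by
        have hgc : (g : G) ∈ Subgroup.closure (Set.range y) := hL ▸ g.2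
        refine Subgroup.closure_le (Subgroup.centralizer {(z : G)}) |>.mpr ?_ hgc
        rintro _ ⟨i, rfl⟩
        rw [SetLike.mem_coe, Subgroup.mem_centralizer_singleton_iff]
        exact (h i).symm
      rw [Subgroup.mem_centralizer_singleton_iff] at hg
      exact Subtype.ext hg
  rw [hcenter]
  change (⨅ i, Subgroup.centralizer {y i}).relIndex L ≤ k ^ k
  calc (⨅ i, Subgroup.centralizer {y i}).relIndex L
      ≤ ∏ i : Fin k, (Subgroup.centralizer {y i}).relIndex L :=
        Subgroup.relIndex_iInf_le _
    _ ≤ ∏ _i : Fin k, k := by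
        refine Finset.prod_le_prod' ?_
        intro i _
        have h1 : (Subgroup.centralizer {y i}).relIndex ⊤ ≠ 0 := by
          rw [Subgroup.relIndex_top_right, hconj i]; omega
        calc (Subgroup.centralizer {y i}).relIndex L
            ≤ (Subgroup.centralizer {y i}).relIndex ⊤ :=
              Subgroup.relIndex_le_of_le_right le_top h1
          _ = k := by rw [Subgroup.relIndex_top_right, hconj i]
    _ = k ^ k := by simp
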